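/- Let P be a Köthe set on a set I with P ≺ P². Then for every p ∈ P there exist q ∈ P and C > 0 such that ∑_{i∈I} |a_i b_i| p_i ≤ C (∑_{i∈I} |a_i| q_i)(∑_{i∈I} |b_i| q_i) for all a, b ∈ λ(P). In particular, λ(P) is closed under pointwise multiplication and the multiplication is jointly continuous for the topology given by the seminorms ‖·‖_p. -/

import Mathlib

/-- If `P ≺ P²`, then for every `p ∈ P` there are `q ∈ P` and `C > 0` such
that `∑ᵢ |aᵢbᵢ| pᵢ ≤ C (∑ᵢ |aᵢ| qᵢ)(∑ᵢ |bᵢ| qᵢ)` for all `a, b ∈ λ(P)`; in particular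
`λ(P)` is closed under pointwise multiplication (and multiplication is jointly continuous
for the seminorms `‖·‖_p`). -/
theorem kothe_mul_estimate {I : Type*} (P : Set (I → ℝ))
    (hP0 : ∀ p ∈ P, ∀ i, 0 ≤ p i)
    (hP1 : ∀ i, ∃ p ∈ P, 0 < p i)
    (hP2 : ∀ p ∈ P, ∀ q ∈ P, ∃ r ∈ P, ∀ i, max (p i) (q i) ≤ r i)
    (hPP2 : ∀ p ∈ P, ∃ q ∈ P, ∃ C : ℝ, 0 < C ∧ ∀ i, p i ≤ C * (q i) ^ 2) :
    ∀ p ∈ P, ∃ q ∈ P, ∃ C : ℝ, 0 < C ∧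
      ∀ a b : I → ℂ,
        (∀ p' ∈ P, Summable fun i => ‖a i‖ * p' i) →
        (∀ p' ∈ P, Summable fun i => ‖b i‖ * p' i) →
        (Summable fun i => ‖a i * b i‖ * p i) ∧
        (∑' i, ‖a i * b i‖ * p i) ≤
          C * (∑' i, ‖a i‖ * q i) * (∑' i, ‖b i‖ * q i) := by
  intro p hp
  obtain ⟨q, hq, C, hC, hCq⟩ := hPP2 p hp
  refine ⟨q, hq, C, hC, fun a b ha hb => ?_⟩
  have hx : Summable fun i => ‖a i‖ * q i := ha q hq
  have hy : Summable fun i => ‖b i‖ * q i := hb q hq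
  set x : I → ℝ := fun i => ‖a i‖ * q i with hxdef
  set y : I → ℝ := fun i => ‖b i‖ * q i with hydef
  have hxn : ∀ i, 0 ≤ x i := fun i => mul_nonneg (norm_nonneg _) (hP0 q hq i)
  have hyn : ∀ i, 0 ≤ y i := fun i => mul_nonneg (norm_nonneg _) (hP0 q hq i)
  have hSy : ∀ i, y i ≤ ∑' j, y j := fun i => Summable.le_tsum hy i (fun j _ => hyn j)
  have hSyn : 0 ≤ ∑' j, y j := tsum_nonneg hyn
  have key : ∀ i, ‖a i * b i‖ * p i ≤ C * (x i * y i) := by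
    intro i
    rw [norm_mul]
    calc ‖a i‖ * ‖b i‖ * p i
        ≤ ‖a i‖ * ‖b i‖ * (C * q i ^ 2) :=
          mul_le_mul_of_nonneg_left (hCq i)
            (mul_nonneg (norm_nonneg _) (norm_nonneg _))
      _ = C * (x i * y i) := by simp only [hxdef, hydef]; ring
  have key2 : ∀ i, C * (x i * y i) ≤ (C * ∑' j, y j) * x i := by
    intro i
    have : x i * y i ≤ x i * ∑' j, y j :=
      mul_le_mul_of_nonneg_left (hSy i) (hxn i)
    nlinarith [hC.le]
  have hmid : Summable fun i => (C * ∑' j, y j) * x i := hx.mul_left _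
  have hsum : Summable fun i => ‖a i * b i‖ * p i := by
    apply Summable.of_nonneg_of_le
      (fun i => mul_nonneg (norm_nonneg _) (hP0 p hp i))
      (fun i => (key i).trans (key2 i)) hmid
  refine ⟨hsum, ?_⟩
  calc (∑' i, ‖a i * b i‖ * p i)
      ≤ ∑' i, (C * ∑' j, y j) * x i :=
        Summable.tsum_le_tsum (fun i => (key i).trans (key2 i)) hsum hmid
    _ = (C * ∑' j, y j) * ∑' i, x i := tsum_mul_left
    _ = C * (∑' i, x i) * (∑' j, y j) := by ring
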